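/- Let a_1, …, a_n ∈ ℝ be such that at least t of the a_i are nonzero, and let r ∈ ℝ. Then at most C(t, ⌊t/2⌋) · 2^{n−t} of the 2^n sums Σ_{i=1}^n ε_i a_i with ε_i ∈ {0,1} are equal to r. -/

import Mathlib

open scoped Classical
open Finset

lemma lo_pos {ι : Type*} [DecidableEq ι] (T : Finset ι) (b : ι → ℝ)
    (hb : ∀ i ∈ T, 0 < b i) (c : ℝ) :
    (T.powerset.filter (fun A => ∑ i ∈ A, b i = c)).card ≤ T.card.choose (T.card / 2) := by
  classical
  set f : Finset ι → Finset {x // x ∈ T} := fun A => A.subtype (· ∈ T) with hf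
  have hback : ∀ A ∈ T.powerset, (f A).map (Function.Embedding.subtype _) = A := by
    intro A hA
    rw [mem_powerset] at hA
    simp only [hf, Finset.subtype_map]
    exact filter_true_of_mem (fun i hi => hA hi)
  have hinj : Set.InjOn f (T.powerset.filter (fun A => ∑ i ∈ A, b i = c)) := by
    intro A hA B hB hAB
    have h := congrArg (Finset.map (Function.Embedding.subtype (· ∈ T))) hAB
    simp only [mem_coe, mem_filter] at hA hB
    rwa [hback A hA.1, hback B hB.1] at h
  set 𝒜 := (T.powerset.filter (fun A => ∑ i ∈ A, b i = c)).image f with h𝒜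
  have hcard : (T.powerset.filter (fun A => ∑ i ∈ A, b i = c)).card = 𝒜.card :=
    (card_image_of_injOn hinj).symm
  have hanti : IsAntichain (· ⊆ ·) (𝒜 : Set (Finset {x // x ∈ T})) := by
    rintro X hX Y hY hne hsub
    simp only [h𝒜, coe_image, Set.mem_image, mem_coe] at hX hY
    obtain ⟨A, hA, rfl⟩ := hX
    obtain ⟨B, hB, rfl⟩ := hY
    have hA' := mem_filter.1 hA
    have hB' := mem_filter.1 hB
    have hAB : A ⊆ B := by
      have h := Finset.map_subset_map (f := Function.Embedding.subtype (· ∈ T)) |>.2 hsub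
      rwa [hback A hA'.1, hback B hB'.1] at h
    have hne' : A ≠ B := fun h => hne (by rw [h])
    obtain ⟨x, hxB, hxA⟩ := Finset.exists_of_ssubset (Finset.ssubset_iff_subset_ne.2 ⟨hAB, hne'⟩)
    have hBT : B ⊆ T := mem_powerset.1 hB'.1
    have hlt : ∑ i ∈ A, b i < ∑ i ∈ B, b i :=
      Finset.sum_lt_sum_of_subset hAB hxB hxA (hb x (hBT hxB))
        (fun j hj _ => le_of_lt (hb j (hBT hj)))
    rw [hA'.2, hB'.2] at hlt
    exact lt_irrefl _ hlt
  calc (T.powerset.filter (fun A => ∑ i ∈ A, b i = c)).card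
      = 𝒜.card := hcard
    _ ≤ (Fintype.card {x // x ∈ T}).choose (Fintype.card {x // x ∈ T} / 2) := IsAntichain.sperner hanti
    _ = T.card.choose (T.card / 2) := by rw [Fintype.card_coe]

theorem stmt3 (n t : ℕ) (a : Fin n → ℝ) (r : ℝ)
    (ht : t ≤ (Finset.univ.filter (fun i => a i ≠ 0)).card) :
    (Finset.univ.filter (fun ε : Fin n → Bool =>
      (∑ i, (if ε i then (1 : ℝ) else 0) * a i) = r)).card
      ≤ t.choose (t / 2) * 2 ^ (n - t) := by
  obtain ⟨T, hTN, hTcard⟩ :=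
    Finset.exists_subset_card_eq ht
  have hTpos : ∀ i ∈ T, 0 < |a i| := fun i hi =>
    abs_pos.2 ((mem_filter.1 (hTN hi)).2)
  set c : ℝ := ∑ i, (if a i < 0 then |a i| else 0) with hc
  set flip : (Fin n → Bool) → (Fin n → Bool) := fun ε i => if a i < 0 then !(ε i) else ε i
    with hflip
  set E' := Finset.univ.filter (fun ε : Fin n → Bool =>
      (∑ i, (if ε i then (1 : ℝ) else 0) * |a i|) = r + c) with hE'
  have hEE' : (Finset.univ.filter (fun ε : Fin n → Bool =>
      (∑ i, (if ε i then (1 : ℝ) else 0) * a i) = r)).card ≤ E'.card := by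
    apply card_le_card_of_injOn flip
    · intro ε hε
      rw [mem_coe, mem_filter] at hε
      rw [hE', mem_coe, mem_filter]
      refine ⟨mem_univ _, ?_⟩
      have key : ∀ i, (if flip ε i then (1 : ℝ) else 0) * |a i|
          = (if ε i then (1 : ℝ) else 0) * a i + (if a i < 0 then |a i| else 0) := by
        intro i
        by_cases h : a i < 0
        · have habs : |a i| = -a i := abs_of_neg h
          cases hb : ε i <;> simp [hflip, h, hb, habs]
        · have habs : |a i| = a i := abs_of_nonneg (not_lt.1 h)
          cases hb : ε i <;> simp [hflip, h, hb, habs]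
      rw [Finset.sum_congr rfl (fun i _ => key i), Finset.sum_add_distrib, hε.2, hc]
    · have hinv : ∀ ε, flip (flip ε) = ε := by
        intro ε; funext i; simp only [hflip]; by_cases h : a i < 0 <;> simp [h]
      exact fun ε₁ _ ε₂ _ h => by rw [← hinv ε₁, h, hinv ε₂]
  have hsplit : ∀ ε : Fin n → Bool, (∑ i, (if ε i then (1 : ℝ) else 0) * |a i|)
      = ∑ i ∈ T.filter (fun i => ε i), |a i|
        + ∑ i ∈ (univ \ T).filter (fun i => ε i), |a i| := by
    intro ε
    rw [← Finset.sum_union (Finset.disjoint_sdiff.mono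
      (filter_subset _ _) (filter_subset _ _))]
    rw [← Finset.filter_union, Finset.union_sdiff_of_subset (subset_univ T),
      Finset.sum_filter]
    apply Finset.sum_congr rfl
    intro i _
    by_cases h : ε i <;> simp [h]
  have hcount : E'.card ≤ t.choose (t / 2) * 2 ^ (n - t) := by
    have hfib : ∀ B ∈ E'.image (fun ε => (univ \ T).filter (fun i => ε i)),
        (E'.filter (fun ε => (univ \ T).filter (fun i => ε i) = B)).card
          ≤ t.choose (t / 2) := by
      intro B hB
      have hmain : (E'.filter (fun ε => (univ \ T).filter (fun i => ε i) = B)).card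
          ≤ (T.powerset.filter (fun A => ∑ i ∈ A, |a i|
              = r + c - ∑ i ∈ B, |a i|)).card := by
        apply card_le_card_of_injOn (fun ε => T.filter (fun i => ε i))
        · intro ε hε
          rw [mem_coe, mem_filter] at hε
          obtain ⟨hε1, hε2⟩ := hε
          rw [hE', mem_filter] at hε1
          rw [mem_coe, mem_filter, mem_powerset]
          refine ⟨filter_subset _ _, ?_⟩
          have := hsplit ε
          rw [hε1.2, hε2] at this
          linarith
        · intro ε₁ h1 ε₂ h2 h
          rw [mem_coe, mem_filter] at h1 h2
          funext i
          by_cases hi : i ∈ T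
          · have m1 : i ∈ T.filter (fun i => ε₁ i) ↔ i ∈ T.filter (fun i => ε₂ i) := by
              rw [show Finset.filter (fun i => ε₁ i = true) T
                = Finset.filter (fun i => ε₂ i = true) T from h]
            simp only [mem_filter, hi, true_and] at m1
            cases hb1 : ε₁ i <;> cases hb2 : ε₂ i <;> simp [hb1, hb2] at m1 ⊢
          · have hi' : i ∈ univ \ T := mem_sdiff.2 ⟨mem_univ _, hi⟩
            have m1 : i ∈ (univ \ T).filter (fun i => ε₁ i)
                ↔ i ∈ (univ \ T).filter (fun i => ε₂ i) := by rw [h1.2, h2.2]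
            simp only [mem_filter, hi', true_and] at m1
            cases hb1 : ε₁ i <;> cases hb2 : ε₂ i <;> simp [hb1, hb2] at m1 ⊢
      calc _ ≤ _ := hmain
        _ ≤ T.card.choose (T.card / 2) := lo_pos T (fun i => |a i|) hTpos _
        _ = t.choose (t / 2) := by rw [hTcard]
    calc E'.card ≤ t.choose (t / 2) * (E'.image (fun ε => (univ \ T).filter (fun i => ε i))).card :=
          card_le_mul_card_image _ _ hfib
      _ ≤ t.choose (t / 2) * 2 ^ (n - t) := by
          apply Nat.mul_le_mul_left
          have hsub : E'.image (fun ε => (univ \ T).filter (fun i => ε i))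
              ⊆ (univ \ T).powerset := by
            intro B hB
            obtain ⟨ε, _, rfl⟩ := mem_image.1 hB
            exact mem_powerset.2 (filter_subset _ _)
          calc _ ≤ ((univ \ T).powerset).card := card_le_card hsub
            _ = 2 ^ (n - t) := by
                rw [card_powerset, card_sdiff_of_subset (subset_univ T), card_univ,
                  Fintype.card_fin, hTcard]
  exact hEE'.trans hcount
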